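/- Let X = [0,1] with the Euclidean metric and define φ : ℝ × X → X by φ_t(x) = x e^t / (1 + x(e^t − 1)). Then φ is a well-defined flow on X, and for every ε>0 there exists δ ∈ (0,1/2) such that for all x,y ∈ [0,1] with |x − y| ≤ δ·min{x, 1−x}, there exists t ∈ [−ε,ε] with φ_t(x) = y. -/

import Mathlib

open Set Metric Filter

/-- The logistic-type flow `φ_t(x) = x e^t / (1 + x (e^t - 1))` on `[0,1]`. -/
noncomputable def logisticFlow (t x : ℝ) : ℝ :=
  x * Real.exp t / (1 + x * (Real.exp t - 1))

lemma logisticFlow_denom_pos {x : ℝ} (hx : x ∈ Set.Icc (0:ℝ) 1) (t : ℝ) :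
    0 < 1 + x * (Real.exp t - 1) := by
  nlinarith [Real.exp_pos t, hx.1, hx.2, mul_nonneg hx.1 (Real.exp_pos t).le]

lemma logisticFlow_mapsTo (t : ℝ) :
    Set.MapsTo (logisticFlow t) (Set.Icc 0 1) (Set.Icc 0 1) := by
  intro x hx
  have hd := logisticFlow_denom_pos hx t
  unfold logisticFlow
  constructor
  · exact div_nonneg (mul_nonneg hx.1 (Real.exp_pos t).le) hd.le
  · rw [div_le_one hd]; nlinarith [hx.1, hx.2]

lemma logisticFlow_add (t s : ℝ) {x : ℝ} (hx : x ∈ Set.Icc (0:ℝ) 1) :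
    logisticFlow (t + s) x = logisticFlow t (logisticFlow s x) := by
  have h1 := (logisticFlow_denom_pos hx s).ne'
  have h3 := (logisticFlow_denom_pos hx (t+s)).ne'
  rw [Real.exp_add] at h3
  have key : 1 + (x * Real.exp s / (1 + x * (Real.exp s - 1))) * (Real.exp t - 1)
      = (1 + x * (Real.exp t * Real.exp s - 1)) / (1 + x * (Real.exp s - 1)) := by
    field_simp; ring
  unfold logisticFlow
  rw [Real.exp_add, key]
  rw [div_mul_eq_mul_div, div_eq_div_iff h3 (by exact div_ne_zero h3 h1)]
  field_simp

theorem logisticFlow_is_flow_and_ball_in_orbit_segment :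
    (∀ t : ℝ, Set.MapsTo (logisticFlow t) (Set.Icc 0 1) (Set.Icc 0 1)) ∧
    (∀ x ∈ Set.Icc (0:ℝ) 1, logisticFlow 0 x = x) ∧
    (∀ t s : ℝ, ∀ x ∈ Set.Icc (0:ℝ) 1,
      logisticFlow (t + s) x = logisticFlow t (logisticFlow s x)) ∧
    ContinuousOn (fun p : ℝ × ℝ => logisticFlow p.1 p.2)
      (Set.univ ×ˢ Set.Icc (0:ℝ) 1) ∧
    (∀ ε > (0:ℝ), ∃ δ : ℝ, 0 < δ ∧ δ < 1/2 ∧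
      ∀ x ∈ Set.Icc (0:ℝ) 1, ∀ y ∈ Set.Icc (0:ℝ) 1,
        |x - y| ≤ δ * min x (1 - x) →
          ∃ t ∈ Set.Icc (-ε) ε, logisticFlow t x = y) := by
  refine ⟨logisticFlow_mapsTo, ?_, fun t s x hx => logisticFlow_add t s hx, ?_, ?_⟩
  · intro x _; simp [logisticFlow]
  · -- continuity
    unfold logisticFlow
    apply ContinuousOn.div
    · fun_prop
    · fun_prop
    · rintro ⟨t, x⟩ ⟨-, hx⟩
      exact (logisticFlow_denom_pos hx t).ne'
  · intro ε hε
    have hE1 : (1:ℝ) < Real.exp ε := by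
      have := Real.add_one_le_exp ε; linarith
    set c : ℝ := (Real.exp ε - 1) / (Real.exp ε + 1) with hc
    have hc0 : 0 < c := div_pos (by linarith) (by linarith)
    set δ : ℝ := min (1/4) c with hδdef
    have hδ0 : 0 < δ := lt_min (by norm_num) hc0
    have hδ4 : δ ≤ 1/4 := min_le_left _ _
    have hδc : δ ≤ c := min_le_right _ _
    -- key inequality: 1 + δ ≤ e^ε (1 - δ)
    have hEδ : 1 + δ ≤ Real.exp ε * (1 - δ) := by
      have : δ * (Real.exp ε + 1) ≤ Real.exp ε - 1 := by
        rw [hc, le_div_iff₀ (by linarith)] at hδc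
        linarith
      nlinarith
    refine ⟨δ, hδ0, by linarith, ?_⟩
    intro x hx y hy hxy
    rcases eq_or_lt_of_le hx.1 with h0 | hx0
    · -- x = 0
      have hy0 : y = x := by
        have : min x (1-x) = 0 := by rw [← h0]; simp
        rw [this, mul_zero] at hxy
        have := abs_nonneg (x - y)
        have : |x - y| = 0 := le_antisymm hxy this
        have := abs_eq_zero.mp this
        linarith
      exact ⟨0, ⟨by linarith, by linarith⟩, by rw [hy0]; simp [logisticFlow]⟩
    rcases eq_or_lt_of_le hx.2 with h1 | hx1
    · -- x = 1
      have hy0 : y = x := by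
        have : min x (1-x) = 0 := by rw [h1]; simp
        rw [this, mul_zero] at hxy
        have h := abs_nonneg (x - y)
        have : |x - y| = 0 := le_antisymm hxy h
        have := abs_eq_zero.mp this
        linarith
      exact ⟨0, ⟨by linarith, by linarith⟩, by rw [hy0]; simp [logisticFlow]⟩
    -- now 0 < x < 1
    have hm1 : min x (1-x) ≤ x := min_le_left _ _
    have hm2 : min x (1-x) ≤ 1 - x := min_le_right _ _
    have hm0 : 0 ≤ min x (1-x) := le_min hx0.le (by linarith)
    rw [abs_sub_le_iff] at hxy
    have hδm : 0 ≤ δ * min x (1-x) := mul_nonneg hδ0.le hm0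
    have hyl : (1 - δ) * x ≤ y := by nlinarith [hxy.1]
    have hyu : y ≤ (1 + δ) * x := by nlinarith [hxy.2]
    have h1yl : (1 - δ) * (1 - x) ≤ 1 - y := by nlinarith [hxy.2]
    have h1yu : 1 - y ≤ (1 + δ) * (1 - x) := by nlinarith [hxy.1]
    have hy0 : 0 < y := lt_of_lt_of_le (by nlinarith) hyl
    have hy1 : y < 1 := by nlinarith
    set r : ℝ := y * (1 - x) / (x * (1 - y)) with hrdef
    have hxy0 : 0 < x * (1 - y) := mul_pos hx0 (by linarith)
    have hr0 : 0 < r := div_pos (mul_pos hy0 (by linarith)) hxy0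
    -- bounds on r
    have hδ1 : (0:ℝ) < 1 - δ := by linarith
    have hrU : r ≤ Real.exp ε := by
      rw [hrdef, div_le_iff₀ hxy0]
      have k1 : y * ((1 - δ) * (1 - x)) ≤ ((1 + δ) * x) * (1 - y) :=
        mul_le_mul hyu h1yl (mul_nonneg (by linarith) (by linarith))
          (mul_nonneg (by linarith) hx0.le)
      have k2 : (1 + δ) * (x * (1 - y)) ≤ (Real.exp ε * (1 - δ)) * (x * (1 - y)) :=
        mul_le_mul_of_nonneg_right hEδ hxy0.le
      have key : (1 - δ) * (y * (1 - x)) ≤ (1 - δ) * (Real.exp ε * (x * (1 - y))) := by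
        ring_nf at k1 k2 ⊢; linarith
      exact le_of_mul_le_mul_left key hδ1
    have hrL : Real.exp (-ε) ≤ r := by
      rw [Real.exp_neg, hrdef, le_div_iff₀ hxy0, inv_mul_le_iff₀ (by positivity)]
      have k1 : ((1 - δ) * x) * (1 - y) ≤ y * ((1 + δ) * (1 - x)) :=
        mul_le_mul hyl h1yu (by linarith) hy0.le
      have k2 : (1 + δ) * (y * (1 - x)) ≤ (Real.exp ε * (1 - δ)) * (y * (1 - x)) :=
        mul_le_mul_of_nonneg_right hEδ (mul_nonneg hy0.le (by linarith))
      have key : (1 - δ) * (x * (1 - y)) ≤ (1 - δ) * (Real.exp ε * (y * (1 - x))) := by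
        ring_nf at k1 k2 ⊢; linarith
      exact le_of_mul_le_mul_left key hδ1
    refine ⟨Real.log r, ⟨?_, ?_⟩, ?_⟩
    · rw [← Real.log_exp (-ε)]
      exact Real.log_le_log (Real.exp_pos _) hrL
    · rw [← Real.log_exp ε]
      exact Real.log_le_log hr0 hrU
    · unfold logisticFlow
      rw [Real.exp_log hr0]
      have hd : 0 < 1 + x * (r - 1) := by
        have : 1 + x * (r - 1) = (1 - x) + x * r := by ring
        rw [this]
        have := mul_pos hx0 hr0
        nlinarith
      rw [div_eq_iff hd.ne', hrdef]
      have hy1' : 1 - y ≠ 0 := (by linarith : (0:ℝ) < 1 - y).ne'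
      field_simp
      ring
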